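/- Let S = {n ∈ ℕ : n ≢ 2 mod 4} and write S as the disjoint union of S_k = {2^k(2n+1) : n ∈ ℕ} over k ∈ ℕ, k ≠ 1. Then the cyclotomic completion Γ^S of Γ = ℤ[1/2][v] decomposes as a direct product: Γ^S ≅ ∏_{k ∈ ℕ, k≠1} Γ^{S_k}. -/

import Mathlib

set_option maxHeartbeats 1000000
set_option synthInstance.maxHeartbeats 400000

open Polynomial Finset

/-- `f` belongs to the multiplicative set `Φ*_S` generated by the cyclotomic
polynomials `Φ_n`, `n ∈ S`, in `R[v]`. -/
def IsCycProdIn (R : Type) [CommRing R] (S : Set ℕ) (f : Polynomial R) : Prop :=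
  ∃ m : ℕ →₀ ℕ, (↑m.support : Set ℕ) ⊆ S ∧ f = m.prod fun i e => (cyclotomic i R) ^ e

/-- The cyclotomic completion `R[v]^S = lim←_{f ∈ Φ*_S} R[v]/(f)`, realized as the
subring of compatible families indexed by `Φ*_S` directed by divisibility. -/
noncomputable def CycCompletion (R : Type) [CommRing R] (S : Set ℕ) :
    Subring (Π f : {f : Polynomial R // IsCycProdIn R S f}, Polynomial R ⧸ Ideal.span {f.1}) where
  carrier := {x | ∀ (f g : {f : Polynomial R // IsCycProdIn R S f}) (h : f.1 ∣ g.1),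
    Ideal.Quotient.factor
      (Ideal.span_singleton_le_span_singleton.mpr h : Ideal.span {g.1} ≤ Ideal.span {f.1}) (x g) = x f}
  one_mem' := by intro f g h; simp
  mul_mem' := by intro a b ha hb f g h; simp [Pi.mul_apply, map_mul, ha f g h, hb f g h]
  add_mem' := by intro a b ha hb f g h; simp [Pi.add_apply, map_add, ha f g h, hb f g h]
  zero_mem' := by intro f g h; simp
  neg_mem' := by intro a ha f g h; simp [Pi.neg_apply, map_neg, ha f g h]

namespace CycProofAux

/-! ### Elementary number theory -/

lemma fac2_eq_one_iff {i : ℕ} (hi : i ≠ 0) : i.factorization 2 = 1 ↔ i % 4 = 2 := by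
  constructor
  · intro h
    have hd := Nat.ordProj_mul_ordCompl_eq_self i 2
    have hodd : ¬ (2 ∣ ordCompl[2] i) := Nat.not_dvd_ordCompl Nat.prime_two hi
    rw [h, pow_one] at hd
    rw [h, pow_one] at hodd
    omega
  · intro h
    have hrep : i = 2 * (2 * (i / 4) + 1) := by omega
    rw [hrep, Nat.factorization_mul (by norm_num) (by omega)]
    rw [Finsupp.add_apply]
    rw [Nat.Prime.factorization Nat.prime_two, Nat.factorization_eq_zero_of_not_dvd (by omega)]
    simp

lemma mem_T_iff {k i : ℕ} : (∃ j : ℕ, i = 2 ^ k * (2 * j + 1)) ↔ i ≠ 0 ∧ i.factorization 2 = k := by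
  constructor
  · rintro ⟨j, rfl⟩
    refine ⟨by positivity, ?_⟩
    rw [Nat.factorization_mul (by positivity) (by omega), Finsupp.add_apply,
      Nat.Prime.factorization_pow Nat.prime_two, Nat.factorization_eq_zero_of_not_dvd (by omega)]
    simp
  · rintro ⟨hi, rfl⟩
    refine ⟨(ordCompl[2] i - 1) / 2, ?_⟩
    have hd := (Nat.ordProj_mul_ordCompl_eq_self i 2).symm
    have hodd : ¬ (2 ∣ ordCompl[2] i) := Nat.not_dvd_ordCompl Nat.prime_two hi
    have hpos : 0 < ordCompl[2] i := Nat.ordCompl_pos 2 hi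
    have : 2 * ((ordCompl[2] i - 1) / 2) + 1 = ordCompl[2] i := by omega
    rw [this]
    exact hd

def Sv : Set ℕ := {n : ℕ | n ≠ 0 ∧ n % 4 ≠ 2}

def Tv (k : ℕ) : Set ℕ := {m : ℕ | ∃ j : ℕ, m = 2 ^ k * (2 * j + 1)}

lemma mem_Sv {i : ℕ} : i ∈ Sv ↔ i ≠ 0 ∧ i.factorization 2 ≠ 1 := by
  unfold Sv
  simp only [Set.mem_setOf_eq]
  constructor
  · rintro ⟨h1, h2⟩
    exact ⟨h1, fun h => h2 ((fac2_eq_one_iff h1).mp h)⟩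
  · rintro ⟨h1, h2⟩
    exact ⟨h1, fun h => h2 ((fac2_eq_one_iff h1).mpr h)⟩

lemma mem_Tv {k i : ℕ} : i ∈ Tv k ↔ i ≠ 0 ∧ i.factorization 2 = k := mem_T_iff

lemma Tv_subset {k : ℕ} (hk : k ≠ 1) : Tv k ⊆ Sv := by
  intro i hi
  rw [mem_Tv] at hi
  rw [mem_Sv]
  exact ⟨hi.1, hi.2.symm ▸ hk⟩

/-! ### Coprimality of cyclotomic polynomials over a ring where 2 is invertible -/

variable {R : Type} [CommRing R]

lemma key_coprime (h2 : IsUnit (2 : R)) {n m : ℕ}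
    (hn : n ≠ 0) (hm : m ≠ 0) (hv : n.factorization 2 ≠ m.factorization 2) :
    IsCoprime (cyclotomic n R) (cyclotomic m R) := by
  have hnm : n ≠ m := fun h => hv (by rw [h])
  by_contra hcop
  have htop : Ideal.span {cyclotomic n R, cyclotomic m R} ≠ ⊤ := by
    intro h
    have h1 : (1 : Polynomial R) ∈ Ideal.span {cyclotomic n R, cyclotomic m R} := by
      rw [h]; trivial
    rw [Ideal.mem_span_pair] at h1
    obtain ⟨u, v, huv⟩ := h1
    exact hcop ⟨u, v, huv⟩
  obtain ⟨M, hMmax, hMle⟩ := Ideal.exists_le_maximal _ htop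
  haveI : M.IsPrime := hMmax.isPrime
  let K := Polynomial R ⧸ M
  let π : Polynomial R →+* K := Ideal.Quotient.mk M
  let μ : K := π X
  have hroot : ∀ l : ℕ, cyclotomic l R ∈ M → (cyclotomic l K).IsRoot μ := by
    intro l hl
    have h0 : π (cyclotomic l R) = 0 := Ideal.Quotient.eq_zero_iff_mem.mpr hl
    have heq : π (cyclotomic l R) = (cyclotomic l K).eval μ := by
      conv_lhs => rw [← Polynomial.eval₂_C_X (p := cyclotomic l R)]
      rw [Polynomial.hom_eval₂, Polynomial.eval₂_eq_eval_map, Polynomial.map_cyclotomic]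
    rw [Polynomial.IsRoot, ← heq, h0]
  have hrn : (cyclotomic n K).IsRoot μ := hroot n (hMle (Ideal.subset_span (by simp)))
  have hrm : (cyclotomic m K).IsRoot μ := hroot m (hMle (Ideal.subset_span (by simp)))
  have h2K : IsUnit (2 : K) := by
    have := h2.map (π.comp (C : R →+* Polynomial R))
    rw [RingHom.comp_apply, map_ofNat C 2, map_ofNat π 2] at this
    exact this
  rcases CharP.char_is_prime_or_zero K (ringChar K) with hp | hp
  · set p := ringChar K with hpdef
    haveI : CharP K p := ringChar.charP K
    haveI : Fact p.Prime := ⟨hp⟩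
    have hp2 : p ≠ 2 := by
      intro h
      have hc : ((p : ℕ) : K) = 0 := CharP.cast_eq_zero K p
      rw [h] at hc
      push_cast at hc
      rw [hc] at h2K
      exact one_ne_zero (α := K) (isUnit_zero_iff.mp h2K).symm
    have hfac : ∀ l : ℕ, l ≠ 0 → (cyclotomic l K).IsRoot μ →
        IsPrimitiveRoot μ (ordCompl[p] l) ∧ (ordCompl[p] l).factorization 2 = l.factorization 2 := by
      intro l hl hr
      haveI : NeZero ((ordCompl[p] l : ℕ) : K) :=
        ⟨fun h => Nat.not_dvd_ordCompl hp hl ((CharP.cast_eq_zero_iff K p _).mp h)⟩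
      constructor
      · rw [← Nat.ordProj_mul_ordCompl_eq_self l p] at hr
        exact (Polynomial.isRoot_cyclotomic_prime_pow_mul_iff_of_charP).mp hr
      · conv_rhs => rw [← Nat.ordProj_mul_ordCompl_eq_self l p]
        rw [Nat.factorization_mul (pow_ne_zero _ hp.pos.ne') (Nat.ordCompl_pos p hl).ne',
          Finsupp.add_apply, Nat.Prime.factorization_pow hp, Finsupp.single_apply]
        simp [hp2]
    obtain ⟨hprn, hen⟩ := hfac n hn hrn
    obtain ⟨hprm, hem⟩ := hfac m hm hrm
    have := hprn.unique hprm
    rw [← hen, ← hem, this] at hv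
    exact hv rfl
  · haveI : CharP K 0 := hp ▸ ringChar.charP K
    haveI : CharZero K := CharP.charP_to_charZero K
    haveI : NeZero ((n : ℕ) : K) := ⟨Nat.cast_ne_zero.mpr hn⟩
    haveI : NeZero ((m : ℕ) : K) := ⟨Nat.cast_ne_zero.mpr hm⟩
    rw [Polynomial.isRoot_cyclotomic_iff] at hrn hrm
    exact hnm (hrn.unique hrm)

/-! ### Products of cyclotomic polynomials and their `k`-parts -/

variable (R) in
/-- The product of cyclotomic polynomials encoded by a finsupp. -/
noncomputable def pp (m : ℕ →₀ ℕ) : Polynomial R :=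
  m.prod fun i e => (cyclotomic i R) ^ e

/-- The `k`-th part of a finsupp: restrict to indices with 2-adic valuation `k`. -/
noncomputable def partk (m : ℕ →₀ ℕ) (k : ℕ) : ℕ →₀ ℕ :=
  m.filter fun i => i.factorization 2 = k

lemma pp_partk_eq (m : ℕ →₀ ℕ) (k : ℕ) :
    pp R (partk m k) = ∏ i ∈ m.support.filter (fun i => i.factorization 2 = k),
      (cyclotomic i R) ^ (m i) := by
  rw [pp, partk, Finsupp.prod, Finsupp.support_filter]
  apply Finset.prod_congr rfl
  intro i hi
  rw [Finsupp.filter_apply, if_pos (Finset.mem_filter.mp hi).2]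

lemma partk_isCycProdIn {m : ℕ →₀ ℕ} (hm : (↑m.support : Set ℕ) ⊆ Sv) (k : ℕ) :
    IsCycProdIn R (Tv k) (pp R (partk m k)) := by
  refine ⟨partk m k, ?_, rfl⟩
  intro i hi
  have hi' : i ∈ (partk m k).support := hi
  rw [partk, Finsupp.support_filter, Finset.mem_filter] at hi'
  have := hm hi'.1
  rw [mem_Sv] at this
  exact mem_Tv.mpr ⟨this.1, hi'.2⟩

lemma pp_partk_dvd (m : ℕ →₀ ℕ) (k : ℕ) : pp R (partk m k) ∣ pp R m := by
  rw [pp_partk_eq, pp, Finsupp.prod]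
  exact Finset.prod_dvd_prod_of_subset _ _ _ (Finset.filter_subset _ _)

lemma pp_decomp {m : ℕ →₀ ℕ} {K : Finset ℕ}
    (hK : m.support.image (fun i => i.factorization 2) ⊆ K) :
    pp R m = ∏ k ∈ K, pp R (partk m k) := by
  have h : ∀ i ∈ m.support, i.factorization 2 ∈ K := fun i hi =>
    hK (Finset.mem_image_of_mem _ hi)
  rw [pp, Finsupp.prod, ← Finset.prod_fiberwise_of_maps_to h]
  apply Finset.prod_congr rfl
  intro k _
  rw [pp_partk_eq]

lemma coprime_pp (h2 : IsUnit (2 : R)) {m m' : ℕ →₀ ℕ} {k k' : ℕ} (hkk' : k ≠ k')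
    (hm : ∀ i ∈ m.support, i ≠ 0 ∧ i.factorization 2 = k)
    (hm' : ∀ i ∈ m'.support, i ≠ 0 ∧ i.factorization 2 = k') :
    IsCoprime (pp R m) (pp R m') := by
  rw [pp, pp, Finsupp.prod, Finsupp.prod]
  apply IsCoprime.prod_left
  intro i hi
  apply IsCoprime.prod_right
  intro j hj
  exact (key_coprime h2 (hm i hi).1 (hm' j hj).1
    (by rw [(hm i hi).2, (hm' j hj).2]; exact hkk')).pow

lemma partk_fib {m : ℕ →₀ ℕ} (hm : (↑m.support : Set ℕ) ⊆ Sv) (k : ℕ) :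
    ∀ i ∈ (partk m k).support, i ≠ 0 ∧ i.factorization 2 = k := by
  intro i hi
  have hi' : i ∈ (partk m k).support := hi
  rw [partk, Finsupp.support_filter, Finset.mem_filter] at hi'
  have := hm hi'.1
  rw [mem_Sv] at this
  exact ⟨this.1, hi'.2⟩

lemma coprime_pp_partk (h2 : IsUnit (2 : R)) {m m' : ℕ →₀ ℕ}
    (hm : (↑m.support : Set ℕ) ⊆ Sv)
    (hm' : (↑m'.support : Set ℕ) ⊆ Sv) {k k' : ℕ} (hkk' : k ≠ k') :
    IsCoprime (pp R (partk m k)) (pp R (partk m' k')) :=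
  coprime_pp h2 hkk' (partk_fib hm k) (partk_fib hm' k')

/-! ### Quotient lemmas -/

lemma pp_partk_dvd' {f : Polynomial R} {m : ℕ →₀ ℕ} (hf : f = pp R m) (k : ℕ) :
    pp R (partk m k) ∣ f := hf.symm ▸ pp_partk_dvd m k

lemma factor_factor {I J L : Ideal (Polynomial R)} (h1 : I ≤ J) (h2 : J ≤ L) (h3 : I ≤ L)
    (a : Polynomial R ⧸ I) :
    Ideal.Quotient.factor h2 (Ideal.Quotient.factor h1 a) =
      Ideal.Quotient.factor h3 a := by
  obtain ⟨u, rfl⟩ := Ideal.Quotient.mk_surjective a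
  simp [Ideal.Quotient.factor_mk]

lemma factor_self {I : Ideal (Polynomial R)} (hle : I ≤ I) (a : Polynomial R ⧸ I) :
    Ideal.Quotient.factor hle a = a := by
  obtain ⟨u, rfl⟩ := Ideal.Quotient.mk_surjective a
  rw [Ideal.Quotient.factor_mk]

lemma K_ne_one {m : ℕ →₀ ℕ} (hm : (↑m.support : Set ℕ) ⊆ Sv) {k : ℕ}
    (hk : k ∈ m.support.image (fun i => i.factorization 2)) : k ≠ 1 := by
  obtain ⟨i, hi, rfl⟩ := Finset.mem_image.mp hk
  exact (mem_Sv.mp (hm hi)).2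

lemma quot_ext (h2 : IsUnit (2 : R)) {f : Polynomial R} {m : ℕ →₀ ℕ}
    (hm : (↑m.support : Set ℕ) ⊆ Sv) (hf : f = pp R m)
    {a b : Polynomial R ⧸ Ideal.span {f}}
    (h : ∀ k ∈ m.support.image (fun i => i.factorization 2),
      ∀ (hle : Ideal.span {f} ≤ Ideal.span {pp R (partk m k)}),
      Ideal.Quotient.factor hle a = Ideal.Quotient.factor hle b) : a = b := by
  obtain ⟨u, rfl⟩ := Ideal.Quotient.mk_surjective a
  obtain ⟨v, rfl⟩ := Ideal.Quotient.mk_surjective b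
  rw [Ideal.Quotient.eq, hf, Ideal.mem_span_singleton, pp_decomp (le_refl _)]
  apply Finset.prod_dvd_of_coprime
  · intro k hk k' hk' hne
    exact coprime_pp_partk h2 hm hm hne
  · intro k hk
    have hle : Ideal.span {f} ≤ Ideal.span {pp R (partk m k)} :=
      Ideal.span_singleton_le_span_singleton.mpr (pp_partk_dvd' hf k)
    have h' := h k hk hle
    rw [Ideal.Quotient.factor_mk, Ideal.Quotient.factor_mk, Ideal.Quotient.eq,
      Ideal.mem_span_singleton] at h'
    exact h'

lemma quot_exists (h2 : IsUnit (2 : R)) {f : Polynomial R} {m : ℕ →₀ ℕ}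
    (hm : (↑m.support : Set ℕ) ⊆ Sv) (hf : f = pp R m)
    (t : ∀ k : {k // k ∈ m.support.image (fun i => i.factorization 2)},
      Polynomial R ⧸ Ideal.span {pp R (partk m k.1)}) :
    ∃ a : Polynomial R ⧸ Ideal.span {f},
      ∀ (k : ℕ) (hk : k ∈ m.support.image (fun i => i.factorization 2))
        (hle : Ideal.span {f} ≤ Ideal.span {pp R (partk m k)}),
        Ideal.Quotient.factor hle a = t ⟨k, hk⟩ := by
  have hpair : Pairwise fun (k k' : {k // k ∈ m.support.image (fun i => i.factorization 2)}) =>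
      IsCoprime (Ideal.span {pp R (partk m k.1)}) (Ideal.span {pp R (partk m k'.1)}) := by
    intro k k' hne
    rw [Ideal.isCoprime_span_singleton_iff]
    exact coprime_pp_partk h2 hm hm (fun h => hne (Subtype.ext h))
  obtain ⟨r, hr⟩ := Ideal.pi_quotient_surjective hpair t
  refine ⟨Ideal.Quotient.mk _ r, ?_⟩
  intro k hk hle
  rw [Ideal.Quotient.factor_mk]
  exact hr ⟨k, hk⟩

lemma incl_S {k : ℕ} (hk : k ≠ 1) {f : Polynomial R} (hf : IsCycProdIn R (Tv k) f) :
    IsCycProdIn R Sv f :=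
  let ⟨m, h1, h2⟩ := hf
  ⟨m, h1.trans (Tv_subset hk), h2⟩

variable (R) in
noncomputable def Fhom : (CycCompletion R Sv) →+*
    Π k : {k : ℕ // k ≠ 1}, CycCompletion R (Tv k.1) where
  toFun x := fun k => ⟨fun f => x.1 ⟨f.1, incl_S k.2 f.2⟩,
    fun f g h => by
      have hx : ∀ (f g : {f : Polynomial R // IsCycProdIn R Sv f}) (h : f.1 ∣ g.1),
          Ideal.Quotient.factor
            (Ideal.span_singleton_le_span_singleton.mpr h : Ideal.span {g.1} ≤ Ideal.span {f.1})
            (x.1 g) = x.1 f := x.2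
      exact hx ⟨f.1, incl_S k.2 f.2⟩ ⟨g.1, incl_S k.2 g.2⟩ h⟩
  map_one' := rfl
  map_mul' _ _ := rfl
  map_add' _ _ := rfl
  map_zero' := rfl

end CycProofAux

namespace CycProofAux

variable {R : Type} [CommRing R]

lemma Fhom_inj (h2 : IsUnit (2 : R)) : Function.Injective (Fhom R) := by
  rw [injective_iff_map_eq_zero]
  intro x hx
  apply Subtype.ext
  funext f
  show x.1 f = 0
  obtain ⟨m, hm, hfm⟩ := f.2
  refine quot_ext h2 hm hfm ?_
  intro k hk hle
  rw [map_zero]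
  have hk1 : k ≠ 1 := K_ne_one hm hk
  have hppk : IsCycProdIn R (Tv k) (pp R (partk m k)) := partk_isCycProdIn hm k
  have h1 := x.2 ⟨pp R (partk m k), incl_S hk1 hppk⟩ f (pp_partk_dvd' hfm k)
  have h0 : x.1 ⟨pp R (partk m k), incl_S hk1 hppk⟩ = 0 := by
    have := congrFun (congrArg Subtype.val (congrFun hx ⟨k, hk1⟩))
      (⟨pp R (partk m k), hppk⟩ : {f : Polynomial R // IsCycProdIn R (Tv k) f})
    exact this
  exact h1.trans h0

lemma good_exists (h2 : IsUnit (2 : R))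
    (y : Π k : {k : ℕ // k ≠ 1}, CycCompletion R (Tv k.1))
    (f : {f : Polynomial R // IsCycProdIn R Sv f}) :
    ∃ a : Polynomial R ⧸ Ideal.span {f.1},
      ∀ (k : ℕ) (hk : k ≠ 1) (h : {g : Polynomial R // IsCycProdIn R (Tv k) g})
        (hd : h.1 ∣ f.1),
        Ideal.Quotient.factor
          (Ideal.span_singleton_le_span_singleton.mpr hd : Ideal.span {f.1} ≤ Ideal.span {h.1})
          a = (y ⟨k, hk⟩).1 h := by
  obtain ⟨m, hm, hfm⟩ := f.2
  obtain ⟨a, ha⟩ := quot_exists h2 hm hfm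
    (fun k => (y ⟨k.1, K_ne_one hm k.2⟩).1 ⟨pp R (partk m k.1), partk_isCycProdIn hm k.1⟩)
  refine ⟨a, ?_⟩
  intro k hk h hd
  obtain ⟨c, hc, hhc⟩ := h.2
  have hcfib : ∀ i ∈ c.support, i ≠ 0 ∧ i.factorization 2 = k := fun i hi => mem_Tv.mp (hc hi)
  by_cases hkK : k ∈ m.support.image (fun i => i.factorization 2)
  · have hdvd : h.1 ∣ pp R (partk m k) := by
      have hcop : IsCoprime h.1
          (∏ k' ∈ (m.support.image (fun i => i.factorization 2)).erase k,
            pp R (partk m k')) := by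
        apply IsCoprime.prod_right
        intro k' hk'
        rw [hhc]
        exact coprime_pp h2 (Ne.symm (Finset.mem_erase.mp hk').1) hcfib (partk_fib hm k')
      have hsplit : f.1 = pp R (partk m k) *
          ∏ k' ∈ (m.support.image (fun i => i.factorization 2)).erase k, pp R (partk m k') := by
        rw [hfm]
        show pp R m = _
        rw [pp_decomp (le_refl (m.support.image (fun i => i.factorization 2)))]
        exact (Finset.mul_prod_erase _ _ hkK).symm
      exact hcop.dvd_of_dvd_mul_right (hsplit ▸ hd)
    have le1 : Ideal.span {f.1} ≤ Ideal.span {pp R (partk m k)} :=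
      Ideal.span_singleton_le_span_singleton.mpr (pp_partk_dvd' hfm k)
    have le2 : Ideal.span {pp R (partk m k)} ≤ Ideal.span {h.1} :=
      Ideal.span_singleton_le_span_singleton.mpr hdvd
    have e1 := factor_factor le1 le2 (Ideal.span_singleton_le_span_singleton.mpr hd) a
    rw [← e1, ha k hkK le1]
    exact (y ⟨k, hk⟩).2 h ⟨pp R (partk m k), partk_isCycProdIn hm k⟩ hdvd
  · have hcop : IsCoprime h.1 f.1 := by
      rw [hfm]
      show IsCoprime h.1 (pp R m)
      rw [pp_decomp (le_refl (m.support.image (fun i => i.factorization 2)))]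
      apply IsCoprime.prod_right
      intro k' hk'
      rw [hhc]
      exact coprime_pp h2 (fun he => hkK (by rw [he]; exact hk')) hcfib (partk_fib hm k')
    have hu : IsUnit h.1 := hcop.isUnit_of_dvd hd
    have htop : Ideal.span {h.1} = ⊤ := Ideal.span_singleton_eq_top.mpr hu
    haveI : Subsingleton (Polynomial R ⧸ Ideal.span {h.1}) :=
      (Ideal.Quotient.subsingleton_iff).mpr htop
    exact Subsingleton.elim _ _

lemma Fhom_surj (h2 : IsUnit (2 : R)) : Function.Surjective (Fhom R) := by
  intro y
  choose xx hxx using good_exists h2 y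
  have hmem : xx ∈ CycCompletion R Sv := by
    intro f g hdvd
    obtain ⟨m, hm, hfm⟩ := f.2
    refine quot_ext h2 hm hfm ?_
    intro k hk hle
    have hk1 : k ≠ 1 := K_ne_one hm hk
    have hppk : IsCycProdIn R (Tv k) (pp R (partk m k)) := partk_isCycProdIn hm k
    have hdf : pp R (partk m k) ∣ f.1 := pp_partk_dvd' hfm k
    have le1 : Ideal.span {g.1} ≤ Ideal.span {f.1} :=
      Ideal.span_singleton_le_span_singleton.mpr hdvd
    have h1 := factor_factor le1 hle
      (Ideal.span_singleton_le_span_singleton.mpr (dvd_trans hdf hdvd)) (xx g)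
    rw [h1, hxx g k hk1 ⟨pp R (partk m k), hppk⟩ (dvd_trans hdf hdvd)]
    exact (hxx f k hk1 ⟨pp R (partk m k), hppk⟩ hdf).symm
  refine ⟨⟨xx, hmem⟩, ?_⟩
  funext k
  apply Subtype.ext
  funext h
  show xx ⟨h.1, incl_S k.2 h.2⟩ = (y k).1 h
  have h1 := hxx ⟨h.1, incl_S k.2 h.2⟩ k.1 k.2 h (dvd_refl _)
  rw [factor_self] at h1
  exact h1

end CycProofAux

/-- With `Γ = ℤ[1/2][v]`, `S = {n : n ≠ 0, n ≢ 2 mod 4}` and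
`S_k = {2^k(2n+1) : n ∈ ℕ}` (so `S` is the disjoint union of the `S_k`, `k ≠ 1`),
the cyclotomic completion decomposes as `Γ^S ≅ ∏_{k ≠ 1} Γ^{S_k}`. -/
theorem cycCompletion_prod_decomposition :
    Nonempty
      (CycCompletion (Localization.Away (2 : ℤ)) {n : ℕ | n ≠ 0 ∧ n % 4 ≠ 2} ≃+*
        Π k : {k : ℕ // k ≠ 1},
          CycCompletion (Localization.Away (2 : ℤ))
            {m : ℕ | ∃ j : ℕ, m = 2 ^ (k : ℕ) * (2 * j + 1)}) := by
  have h2 : IsUnit (2 : Localization.Away (2 : ℤ)) := by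
    have : IsUnit (algebraMap ℤ (Localization.Away (2 : ℤ)) 2) :=
      IsLocalization.Away.algebraMap_isUnit 2
    simpa using this
  exact ⟨RingEquiv.ofBijective (CycProofAux.Fhom (Localization.Away (2 : ℤ)))
    ⟨CycProofAux.Fhom_inj h2, CycProofAux.Fhom_surj h2⟩⟩
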